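/- Let L and L₀ be 3×3 real symmetric positive definite matrices, let F be an invertible 3×3 real matrix, and set G = L^{-1/2} F L₀^{1/2}. Then |adj G| ≥ C₂ |adj F| with C₂ = (1/3) · l_min(L₀)/l_max(L). -/

import Mathlib

open Matrix


lemma trace_nonneg' {H : Matrix (Fin 3) (Fin 3) ℝ} (hH : H.PosSemidef) : 0 ≤ H.trace := by
  rw [Matrix.trace]
  apply Finset.sum_nonneg
  intro i _
  exact hH.diag_nonneg

lemma trace_ge_left {H M : Matrix (Fin 3) (Fin 3) ℝ} {c : ℝ}
    (h : (H - c • 1).PosSemidef) :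
    c * Matrix.trace (Mᵀ * M) ≤ Matrix.trace (Mᵀ * H * M) := by
  have h2 := trace_nonneg' (h.conjTranspose_mul_mul_same M)
  rw [conjTranspose_eq_transpose_of_trivial] at h2
  have e : Mᵀ * (H - c • 1) * M = Mᵀ * H * M - c • (Mᵀ * M) := by
    rw [Matrix.mul_sub, Matrix.sub_mul]
    simp [Matrix.mul_smul, Matrix.smul_mul]
  rw [e, Matrix.trace_sub, Matrix.trace_smul] at h2
  simpa [smul_eq_mul] using h2

lemma trace_ge_right {H M : Matrix (Fin 3) (Fin 3) ℝ} {c : ℝ}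
    (h : (H - c • 1).PosSemidef) :
    c * Matrix.trace (M * Mᵀ) ≤ Matrix.trace (M * H * Mᵀ) := by
  have h2 := trace_nonneg' (h.mul_mul_conjTranspose_same M)
  rw [conjTranspose_eq_transpose_of_trivial] at h2
  have e : M * (H - c • 1) * Mᵀ = M * H * Mᵀ - c • (M * Mᵀ) := by
    rw [Matrix.mul_sub, Matrix.sub_mul]
    simp [Matrix.mul_smul, Matrix.smul_mul]
  rw [e, Matrix.trace_sub, Matrix.trace_smul] at h2
  simpa [smul_eq_mul] using h2

lemma adj_unitary {U : Matrix (Fin 3) (Fin 3) ℝ} (hU : U ∈ Matrix.unitaryGroup (Fin 3) ℝ) :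
    U.adjugate = U.det • star U := by
  have h1 : star U * U = 1 := (Matrix.mem_unitaryGroup_iff').mp hU
  calc U.adjugate = (star U * U) * U.adjugate := by rw [h1, one_mul]
    _ = star U * (U * U.adjugate) := by rw [mul_assoc]
    _ = star U * (U.det • 1) := by rw [Matrix.mul_adjugate]
    _ = U.det • star U := by rw [Matrix.mul_smul, mul_one]

lemma adj_conj_psd {U : Matrix (Fin 3) (Fin 3) ℝ} (hU : U ∈ Matrix.unitaryGroup (Fin 3) ℝ)
    (v : Fin 3 → ℝ) (c : ℝ) (h : ∀ i, c ≤ ∏ j ∈ Finset.univ.erase i, v j) :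
    ((U * Matrix.diagonal v * star U).adjugate - c • 1).PosSemidef := by
  have hU' : star U ∈ Matrix.unitaryGroup (Fin 3) ℝ := Unitary.star_mem hU
  have h1 : U * star U = 1 := (Matrix.mem_unitaryGroup_iff).mp hU
  have hdet : (star U).det * U.det = 1 := by
    rw [← Matrix.det_mul, (Matrix.mem_unitaryGroup_iff').mp hU, Matrix.det_one]
  have hadj : (U * Matrix.diagonal v * star U).adjugate
      = U * (Matrix.diagonal fun i => ∏ j ∈ Finset.univ.erase i, v j) * star U := by
    rw [Matrix.adjugate_mul_distrib, Matrix.adjugate_mul_distrib, adj_unitary hU,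
      adj_unitary hU', star_star, Matrix.adjugate_diagonal]
    rw [Matrix.smul_mul, Matrix.mul_smul, Matrix.mul_smul, smul_smul, hdet, one_smul, mul_assoc]
  have e : (U * Matrix.diagonal v * star U).adjugate - c • 1
      = U * (Matrix.diagonal fun i => (∏ j ∈ Finset.univ.erase i, v j) - c) * star U := by
    rw [hadj, ← Matrix.diagonal_sub (fun i => ∏ j ∈ Finset.univ.erase i, v j) (fun _ => c)]
    rw [Matrix.mul_sub, Matrix.sub_mul, ← Matrix.smul_one_eq_diagonal]
    rw [Matrix.mul_smul, Matrix.smul_mul, mul_one, h1]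
  rw [e]
  have hd : (Matrix.diagonal fun i => (∏ j ∈ Finset.univ.erase i, v j) - c).PosSemidef :=
    Matrix.posSemidef_diagonal_iff.mpr fun i => by linarith [h i]
  have := hd.mul_mul_conjTranspose_same U
  rwa [← Matrix.star_eq_conjTranspose] at this

/-- Frobenius norm of a 3×3 real matrix: |M| = √(tr(Mᵀ M)). -/
noncomputable def frobNorm (M : Matrix (Fin 3) (Fin 3) ℝ) : ℝ :=
  Real.sqrt (Matrix.trace (Mᵀ * M))

/-- Smallest eigenvalue of a symmetric (Hermitian) real matrix. -/
noncomputable def lMin {M : Matrix (Fin 3) (Fin 3) ℝ} (h : M.IsHermitian) : ℝ :=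
  ⨅ i, h.eigenvalues i

/-- Largest eigenvalue of a symmetric (Hermitian) real matrix. -/
noncomputable def lMax {M : Matrix (Fin 3) (Fin 3) ℝ} (h : M.IsHermitian) : ℝ :=
  ⨆ i, h.eigenvalues i

/-- The unique symmetric positive (semi)definite square root of a positive definite matrix. -/
noncomputable def msqrt {M : Matrix (Fin 3) (Fin 3) ℝ} (h : M.PosDef) : Matrix (Fin 3) (Fin 3) ℝ :=
  (h.1.eigenvectorUnitary : Matrix (Fin 3) (Fin 3) ℝ) *
    diagonal ((↑) ∘ (Real.sqrt ·) ∘ h.1.eigenvalues) *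
    (star (h.1.eigenvectorUnitary : Matrix (Fin 3) (Fin 3) ℝ))

lemma msqrt_props {M : Matrix (Fin 3) (Fin 3) ℝ} (h : M.PosDef) :
    (msqrt h)ᵀ = msqrt h ∧ msqrt h * msqrt h = M := by
  have hU : star (h.1.eigenvectorUnitary : Matrix (Fin 3) (Fin 3) ℝ) *
      (h.1.eigenvectorUnitary : Matrix (Fin 3) (Fin 3) ℝ) = 1 :=
    (Matrix.mem_unitaryGroup_iff').mp h.1.eigenvectorUnitary.2
  have hsp := h.1.spectral_theorem
  simp only [RCLike.ofReal_real_eq_id] at hsp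
  unfold msqrt
  set U : Matrix (Fin 3) (Fin 3) ℝ := (h.1.eigenvectorUnitary : Matrix (Fin 3) (Fin 3) ℝ)
  set D := diagonal ((fun x : ℝ => x) ∘ (Real.sqrt ·) ∘ h.1.eigenvalues) with hD
  constructor
  · rw [← conjTranspose_eq_transpose_of_trivial]
    simp only [conjTranspose_mul, star_eq_conjTranspose, conjTranspose_conjTranspose, hD,
      diagonal_conjTranspose, mul_assoc]
    congr 3
  · have hDD : D * D = diagonal h.1.eigenvalues := by
      rw [hD, diagonal_mul_diagonal]; congr 1; funext i
      simp [Real.mul_self_sqrt (h.eigenvalues_pos i).le]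
    calc U * D * star U * (U * D * star U) = U * (D * (star U * U) * D) * star U := by
          simp only [mul_assoc]
      _ = M := by
          rw [hU, mul_one, hDD]
          conv_rhs => rw [hsp]
          simp [Unitary.conjStarAlgAut_apply]
          rfl
theorem stmt3 (L L0 F : Matrix (Fin 3) (Fin 3) ℝ) (hL : L.PosDef) (hL0 : L0.PosDef)
    (hF : IsUnit F.det) :
    (1 / 3) * (lMin hL0.isHermitian / lMax hL.isHermitian) * frobNorm F.adjugate ≤
      frobNorm ((msqrt hL)⁻¹ * F * msqrt hL0).adjugate := by
  set A := msqrt hL with hAdef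
  set B := msqrt hL0 with hBdef
  set N := F.adjugate with hNdef
  have hAt : Aᵀ = A := by
    exact (msqrt_props hL).1
  have hBt : Bᵀ = B := by
    exact (msqrt_props hL0).1
  have hA2 : A * A = L := (msqrt_props hL).2
  have hB2 : B * B = L0 := (msqrt_props hL0).2
  set P := B.adjugate with hPdef
  set Q := (A⁻¹).adjugate with hQdef
  have hR : (A⁻¹ * F * B).adjugate = P * (N * Q) := by
    rw [Matrix.adjugate_mul_distrib, Matrix.adjugate_mul_distrib]
  have hPt : Pᵀ = P := by rw [hPdef, Matrix.adjugate_transpose, hBt]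
  have hQt : Qᵀ = Q := by
    rw [hQdef, Matrix.adjugate_transpose, Matrix.transpose_nonsing_inv, hAt]
  have hPP : P * P = L0.adjugate := by rw [hPdef, ← Matrix.adjugate_mul_distrib, hB2]
  have hQQ : Q * Q = (L⁻¹).adjugate := by
    rw [hQdef, ← Matrix.adjugate_mul_distrib, ← Matrix.mul_inv_rev, hA2]
  -- eigen data
  set lam := hL.isHermitian.eigenvalues with hlam
  set lam0 := hL0.isHermitian.eigenvalues with hlam0
  set m0 := lMin hL0.isHermitian with hm0def
  set Mx := lMax hL.isHermitian with hMxdef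
  have hm0_le : ∀ i, m0 ≤ lam0 i := fun i =>
    ciInf_le (Set.Finite.bddBelow (Set.finite_range _)) i
  have hle_Mx : ∀ i, lam i ≤ Mx := fun i =>
    le_ciSup (Set.Finite.bddAbove (Set.finite_range _)) i
  have hm0pos : 0 < m0 := by
    obtain ⟨j, hj⟩ := exists_eq_ciInf_of_finite (f := lam0)
    rw [hm0def, lMin, ← hj]
    exact hL0.eigenvalues_pos j
  have hlampos : ∀ i, 0 < lam i := fun i => hL.eigenvalues_pos i
  have hMxpos : 0 < Mx := lt_of_lt_of_le (hlampos 0) (hle_Mx 0)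
  -- spectral decompositions
  set U0 : Matrix (Fin 3) (Fin 3) ℝ := (hL0.isHermitian.eigenvectorUnitary : Matrix (Fin 3) (Fin 3) ℝ) with hU0def
  set U : Matrix (Fin 3) (Fin 3) ℝ := (hL.isHermitian.eigenvectorUnitary : Matrix (Fin 3) (Fin 3) ℝ) with hUdef
  have hU0mem : U0 ∈ Matrix.unitaryGroup (Fin 3) ℝ := (hL0.isHermitian.eigenvectorUnitary).2
  have hUmem : U ∈ Matrix.unitaryGroup (Fin 3) ℝ := (hL.isHermitian.eigenvectorUnitary).2
  have hsp0 : L0 = U0 * Matrix.diagonal lam0 * star U0 := by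
    have := hL0.isHermitian.spectral_theorem
    simpa [RCLike.ofReal_real_eq_id] using this
  have hsp : L = U * Matrix.diagonal lam * star U := by
    have := hL.isHermitian.spectral_theorem
    simpa [RCLike.ofReal_real_eq_id] using this
  have hspInv : L⁻¹ = U * Matrix.diagonal (fun i => (lam i)⁻¹) * star U := by
    apply Matrix.inv_eq_right_inv
    have h1 : star U * U = 1 := (Matrix.mem_unitaryGroup_iff').mp hUmem
    have h1' : U * star U = 1 := (Matrix.mem_unitaryGroup_iff).mp hUmem
    have hdd : Matrix.diagonal lam * Matrix.diagonal (fun i => (lam i)⁻¹) = 1 := by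
      rw [Matrix.diagonal_mul_diagonal]
      have : (fun i => lam i * (lam i)⁻¹) = fun _ => (1:ℝ) := by
        funext i; exact mul_inv_cancel₀ (ne_of_gt (hlampos i))
      rw [this, Matrix.diagonal_one]
    rw [hsp]
    simp only [mul_assoc]
    rw [← mul_assoc (star U) U, h1, one_mul, ← mul_assoc (Matrix.diagonal lam), hdd, one_mul, h1']
  -- psd bounds
  have hcard : ∀ i : Fin 3, (Finset.univ.erase i).card = 2 := by
    intro i
    rw [Finset.card_erase_of_mem (Finset.mem_univ i), Finset.card_univ]
    rfl
  have hP2psd : (L0.adjugate - (m0 * m0) • 1).PosSemidef := by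
    have hb : ∀ i, m0 * m0 ≤ ∏ j ∈ Finset.univ.erase i, lam0 j := by
      intro i
      calc m0 * m0 = ∏ _j ∈ Finset.univ.erase i, m0 := by
            rw [Finset.prod_const, hcard i, sq]
        _ ≤ ∏ j ∈ Finset.univ.erase i, lam0 j :=
            Finset.prod_le_prod (fun _ _ => le_of_lt hm0pos) (fun j _ => hm0_le j)
    have := adj_conj_psd hU0mem lam0 (m0 * m0) hb
    rwa [← hsp0] at this
  have hQ2psd : ((L⁻¹).adjugate - (Mx⁻¹ * Mx⁻¹) • 1).PosSemidef := by
    have hb : ∀ i, Mx⁻¹ * Mx⁻¹ ≤ ∏ j ∈ Finset.univ.erase i, (lam j)⁻¹ := by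
      intro i
      calc Mx⁻¹ * Mx⁻¹ = ∏ _j ∈ Finset.univ.erase i, Mx⁻¹ := by
            rw [Finset.prod_const, hcard i, sq]
        _ ≤ ∏ j ∈ Finset.univ.erase i, (lam j)⁻¹ :=
            Finset.prod_le_prod (fun _ _ => le_of_lt (inv_pos.mpr hMxpos))
              (fun j _ => inv_anti₀ (hlampos j) (hle_Mx j))
    have := adj_conj_psd hUmem (fun i => (lam i)⁻¹) (Mx⁻¹ * Mx⁻¹) hb
    rwa [← hspInv] at this
  -- trace chain
  have t1 : (m0 * m0) * Matrix.trace ((N * Q)ᵀ * (N * Q))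
      ≤ Matrix.trace ((P * (N * Q))ᵀ * (P * (N * Q))) := by
    have h := trace_ge_left (M := N * Q) hP2psd
    have e : (P * (N * Q))ᵀ * (P * (N * Q)) = (N * Q)ᵀ * L0.adjugate * (N * Q) := by
      rw [Matrix.transpose_mul, hPt, ← hPP]
      simp only [Matrix.mul_assoc]
    rw [e]; exact h
  have t2 : (Mx⁻¹ * Mx⁻¹) * Matrix.trace (Nᵀ * N)
      ≤ Matrix.trace ((N * Q)ᵀ * (N * Q)) := by
    have h := trace_ge_right (M := N) hQ2psd
    have e : Matrix.trace ((N * Q)ᵀ * (N * Q)) = Matrix.trace (N * (L⁻¹).adjugate * Nᵀ) := by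
      rw [Matrix.transpose_mul, hQt, ← hQQ, Matrix.trace_mul_comm]
      congr 1
      simp only [Matrix.mul_assoc]
    have e2 : Matrix.trace (N * Nᵀ) = Matrix.trace (Nᵀ * N) := Matrix.trace_mul_comm _ _
    rw [e]
    calc (Mx⁻¹ * Mx⁻¹) * Matrix.trace (Nᵀ * N)
        = (Mx⁻¹ * Mx⁻¹) * Matrix.trace (N * Nᵀ) := by rw [e2]
      _ ≤ _ := h
  -- combine
  have hTN : 0 ≤ Matrix.trace (Nᵀ * N) := by
    have := Matrix.posSemidef_conjTranspose_mul_self N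
    rw [conjTranspose_eq_transpose_of_trivial] at this
    exact trace_nonneg' this
  rw [frobNorm, frobNorm, hR]
  have hc : 0 ≤ m0 / Mx := le_of_lt (div_pos hm0pos hMxpos)
  have key : (m0 / Mx) ^ 2 * Matrix.trace (Nᵀ * N)
      ≤ Matrix.trace ((P * (N * Q))ᵀ * (P * (N * Q))) := by
    have : (m0 / Mx) ^ 2 * Matrix.trace (Nᵀ * N)
        = (m0 * m0) * ((Mx⁻¹ * Mx⁻¹) * Matrix.trace (Nᵀ * N)) := by
      field_simp
    rw [this]
    calc (m0 * m0) * ((Mx⁻¹ * Mx⁻¹) * Matrix.trace (Nᵀ * N))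
        ≤ (m0 * m0) * Matrix.trace ((N * Q)ᵀ * (N * Q)) := by
          apply mul_le_mul_of_nonneg_left t2 (mul_nonneg (le_of_lt hm0pos) (le_of_lt hm0pos))
      _ ≤ _ := t1
  calc (1 / 3) * (m0 / Mx) * Real.sqrt (Matrix.trace (Nᵀ * N))
      ≤ (m0 / Mx) * Real.sqrt (Matrix.trace (Nᵀ * N)) := by
        nlinarith [Real.sqrt_nonneg (Matrix.trace (Nᵀ * N)), hc,
          mul_nonneg hc (Real.sqrt_nonneg (Matrix.trace (Nᵀ * N)))]
    _ = Real.sqrt ((m0 / Mx) ^ 2 * Matrix.trace (Nᵀ * N)) := by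
        rw [Real.sqrt_mul (sq_nonneg _), Real.sqrt_sq hc]
    _ ≤ Real.sqrt (Matrix.trace ((P * (N * Q))ᵀ * (P * (N * Q)))) := Real.sqrt_le_sqrt key
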